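/- arXiv:math/0703707 — 2 statements merged into one kernel-verified Lean document; each statement's English description precedes it below -/
import Mathlib

section
/- Let p be an odd prime, d ≥ 2 with d ∣ p−1, f = (p−1)/d. For all 0 ≤ k ≤ d−1: Σ_{l=0}^{d−1} η_l · η_{l+k} = p·δ_{θk} − f, where δ_{θk} is Kronecker's delta and period indices are taken mod d. -/
open Finset

/-- The Gauss period `η_i = Σ_{u=0}^{f-1} ζ^{ω^{du+i}}`. -/
noncomputable def gaussPeriod (p d f : ℕ) (ω : (ZMod p)ˣ) (ζ : ℂ) (i : ℕ) : ℂ :=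
  ∑ u ∈ Finset.range f, ζ ^ (((ω : ZMod p) ^ (d * u + i)).val)

/-- The cyclotomic number `(i,j)` of order `d`. -/
noncomputable def cycNum (p d f : ℕ) (ω : (ZMod p)ˣ) (i j : ℕ) : ℕ :=
  Nat.card {uv : ℕ × ℕ // uv.1 < f ∧ uv.2 < f ∧
    (1 : ZMod p) + (ω : ZMod p) ^ (d * uv.1 + i) = (ω : ZMod p) ^ (d * uv.2 + j)}

/-- The cyclotomic integer `n(k,ν) = Σ_{i=0}^{d-1} η_i^k · η_{i+ν}`. -/
noncomputable def nInt (p d f : ℕ) (ω : (ZMod p)ˣ) (ζ : ℂ) (k ν : ℕ) : ℂ :=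
  ∑ i ∈ Finset.range d, (gaussPeriod p d f ω ζ i) ^ k * gaussPeriod p d f ω ζ (i + ν)

/-- `θ = 0` if `f` is even, `θ = d/2` if `f` is odd. -/
def theta (d f : ℕ) : ℕ := if Even f then 0 else d / 2

/-- `N(k,a)`: the number of `k`-tuples of nonzero `d`-th powers summing to `a`. -/
noncomputable def waringCount (p d k : ℕ) (a : ZMod p) : ℕ :=
  Nat.card {t : Fin k → ZMod p //
    (∀ i, ∃ b : (ZMod p)ˣ, ((b : ZMod p)) ^ d = t i) ∧ ∑ i, t i = a}

/-- `s_d(p,a)`: the least `k ≥ 1` such that `a` is a sum of `k` nonzero `d`-th powers. -/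
noncomputable def sWaring (p d : ℕ) (a : ZMod p) : ℕ :=
  sInf {k | 1 ≤ k ∧ ∃ u : Fin k → (ZMod p)ˣ, a = ∑ i, ((u i : ZMod p)) ^ d}

/-- `g_d(p) = max_{a ∈ 𝔽_p^*} s_d(p,a)`. -/
noncomputable def gWaring (p d : ℕ) : ℕ :=
  sSup {s | ∃ a : (ZMod p)ˣ, s = sWaring p d (a : ZMod p)}

/-- Product of a chain of cyclotomic numbers `(a,x₁)(x₁,x₂)⋯(xₘ,b)`. -/
noncomputable def chainProd (c : ℕ → ℕ → ℕ) (a b : ℕ) : List ℕ → ℕ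
  | [] => c a b
  | x :: xs => c a x * chainProd c x b xs

/-- Sum over all chains of `m` intermediate indices `0 ≤ i < d` of the products
`(a,i₂)(i₂,i₃)⋯(i_{m+1},b)` of consecutive cyclotomic numbers. -/
noncomputable def chainSum (d : ℕ) (c : ℕ → ℕ → ℕ) (a b m : ℕ) : ℕ :=
  ∑ v : Fin m → Fin d, chainProd c a b (List.ofFn fun i => ((v i : ℕ)))

section Helpers

variable {p : ℕ} {ζ : ℂ}

lemma zeta_pow_mod (hζ : IsPrimitiveRoot ζ p) (a : ℕ) : ζ ^ (a % p) = ζ ^ a := by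
  conv_rhs => rw [← Nat.div_add_mod a p]
  rw [pow_add, pow_mul, hζ.pow_eq_one, one_pow, one_mul]

lemma zeta_val_add [NeZero p] (hζ : IsPrimitiveRoot ζ p) (x y : ZMod p) :
    ζ ^ (x + y).val = ζ ^ x.val * ζ ^ y.val := by
  rw [ZMod.val_add, zeta_pow_mod hζ, pow_add]

lemma zeta_sum_all [NeZero p] (hp : 1 < p) (hζ : IsPrimitiveRoot ζ p) :
    ∑ y : ZMod p, ζ ^ y.val = 0 := by
  rw [← hζ.geom_sum_eq_zero hp]
  exact Finset.sum_nbij' (fun y => y.val) (fun i => (i : ZMod p))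
    (fun y _ => Finset.mem_range.mpr (ZMod.val_lt y))
    (fun i _ => Finset.mem_univ _)
    (fun y _ => ZMod.natCast_rightInverse y)
    (fun i hi => ZMod.val_cast_of_lt (Finset.mem_range.mp hi))
    (fun y _ => rfl)

lemma zeta_sum_units [NeZero p] (hp : p.Prime) (hζ : IsPrimitiveRoot ζ p) :
    ∑ x : (ZMod p)ˣ, ζ ^ ((x : ZMod p)).val = -1 := by
  haveI : Fact p.Prime := ⟨hp⟩
  have h0 : ∑ y : ZMod p, ζ ^ y.val = 0 := zeta_sum_all hp.one_lt hζ
  have h1 : ∑ x : (ZMod p)ˣ, ζ ^ ((x : ZMod p)).val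
      = ∑ y ∈ (Finset.univ : Finset (ZMod p)).erase 0, ζ ^ y.val := by
    refine Finset.sum_bij (fun x _ => (x : ZMod p)) ?_ ?_ ?_ ?_
    · intro x _; exact Finset.mem_erase.mpr ⟨x.ne_zero, Finset.mem_univ _⟩
    · intro a _ b _ h; exact Units.ext h
    · intro y hy
      have hy0 : y ≠ 0 := (Finset.mem_erase.mp hy).1
      exact ⟨(isUnit_iff_ne_zero.mpr hy0).unit, Finset.mem_univ _,
        (isUnit_iff_ne_zero.mpr hy0).unit_spec⟩
    · intro x _; rfl
  have h2 : (ζ : ℂ) ^ (0 : ZMod p).val + ∑ y ∈ (Finset.univ : Finset (ZMod p)).erase 0, ζ ^ y.val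
      = ∑ y : ZMod p, ζ ^ y.val :=
    Finset.add_sum_erase (Finset.univ : Finset (ZMod p)) (fun y => ζ ^ y.val) (Finset.mem_univ 0)
  rw [ZMod.val_zero, pow_zero] at h2
  rw [h1]
  exact eq_neg_of_add_eq_zero_right (h2.trans h0)

lemma zeta_sum_units_mul [NeZero p] (hp : p.Prime) (hζ : IsPrimitiveRoot ζ p) (c : ZMod p) :
    ∑ x : (ZMod p)ˣ, ζ ^ (((x : ZMod p)) * c).val = (if c = 0 then (p : ℂ) else 0) - 1 := by
  haveI : Fact p.Prime := ⟨hp⟩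
  by_cases hc : c = 0
  · subst hc
    simp only [mul_zero, ZMod.val_zero, pow_zero, Finset.sum_const, nsmul_eq_mul, mul_one,
      if_pos rfl]
    rw [Finset.card_univ, ZMod.card_units_eq_totient, Nat.totient_prime hp]
    have : 1 ≤ p := hp.one_lt.le
    push_cast [Nat.cast_sub this]
    ring
  · rw [if_neg hc, zero_sub]
    have key : ∑ x : (ZMod p)ˣ, ζ ^ (((x : ZMod p)) * c).val
        = ∑ x : (ZMod p)ˣ, ζ ^ ((x : ZMod p)).val := by
      rw [← Equiv.sum_comp (Equiv.mulRight (Units.mk0 c hc))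
        (fun x : (ZMod p)ˣ => ζ ^ ((x : ZMod p)).val)]
      rfl
    rw [key, zeta_sum_units hp hζ]

end Helpers

/-- `Σ_{l=0}^{d-1} η_l·η_{l+k} = p·δ_{θk} − f`. -/
theorem sum_gaussPeriod_mul (p d f : ℕ) (hp : p.Prime) (hodd : Odd p)
    (hd : 2 ≤ d) (hdvd : d ∣ p - 1) (hf : f = (p - 1) / d)
    (ω : (ZMod p)ˣ) (hω : ∀ x : (ZMod p)ˣ, ∃ n : ℕ, ω ^ n = x)
    (ζ : ℂ) (hζ : IsPrimitiveRoot ζ p)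
    (k : ℕ) (hk : k < d) :
    ∑ l ∈ Finset.range d, gaussPeriod p d f ω ζ l * gaussPeriod p d f ω ζ (l + k)
      = (p : ℂ) * (if theta d f = k then 1 else 0) - (f : ℂ) := by
  haveI : Fact p.Prime := ⟨hp⟩
  haveI : NeZero p := ⟨hp.pos.ne'⟩
  have hp3 : 3 ≤ p := by
    have h2 : p ≠ 2 := by rintro rfl; simp [Nat.odd_iff] at hodd
    have := hp.two_le; omega
  have hP : p - 1 = d * f := by rw [hf, Nat.mul_div_cancel' hdvd]
  have hd0 : 0 < d := by omega
  have hf0 : 0 < f := by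
    rcases Nat.eq_zero_or_pos f with h | h
    · rw [h, Nat.mul_zero] at hP; omega
    · exact h
  have hP0 : 0 < p - 1 := by omega
  have hord : orderOf ω = p - 1 := by
    have hcard : Nat.card (ZMod p)ˣ = p - 1 := by
      rw [Nat.card_eq_fintype_card, ZMod.card_units_eq_totient, Nat.totient_prime hp]
    rw [← hcard]
    apply orderOf_eq_card_of_forall_mem_zpowers
    intro x
    obtain ⟨n, hn⟩ := hω x
    exact Subgroup.mem_zpowers_iff.mpr ⟨n, by rw [zpow_natCast]; exact hn⟩
  have hpow_units : ∀ a b : ℕ, a ≡ b [MOD (p-1)] → ω ^ a = ω ^ b := fun a b h =>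
    pow_eq_pow_iff_modEq.mpr (by rw [hord]; exact h)
  have hpow : ∀ a b : ℕ, a ≡ b [MOD (p-1)] → (ω : ZMod p) ^ a = (ω : ZMod p) ^ b := by
    intro a b h
    have := congrArg (Units.val) (hpow_units a b h)
    simpa [Units.val_pow_eq_pow_val] using this
  have hinj : ∀ a < p - 1, ∀ b < p - 1, ω ^ a = ω ^ b → a = b := by
    intro a ha b hb h
    have h2 := pow_eq_pow_iff_modEq.mp h
    rw [hord] at h2
    rwa [Nat.ModEq, Nat.mod_eq_of_lt ha, Nat.mod_eq_of_lt hb] at h2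
  -- ω^((p-1)/2) = -1
  have hneg : (ω : ZMod p) ^ ((p-1)/2) = -1 := by
    have h2M : 2 * ((p-1)/2) = p - 1 := by obtain ⟨m, hm⟩ := hodd; omega
    have hx2 : (ω ^ ((p-1)/2)) ^ 2 = 1 := by
      rw [← pow_mul, mul_comm, h2M, ← hord, pow_orderOf_eq_one]
    have hx1 : ω ^ ((p-1)/2) ≠ 1 := by
      intro h
      have h3 := orderOf_dvd_of_pow_eq_one h
      rw [hord] at h3
      have := Nat.le_of_dvd (by omega) h3
      omega
    have hy2 : ((ω : ZMod p) ^ ((p-1)/2)) ^ 2 = 1 := by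
      have := congrArg Units.val hx2
      simpa [Units.val_pow_eq_pow_val] using this
    have hy1 : (ω : ZMod p) ^ ((p-1)/2) ≠ 1 := by
      intro h
      apply hx1
      apply Units.ext
      simpa [Units.val_pow_eq_pow_val] using h
    have hfac : ((ω : ZMod p) ^ ((p-1)/2) - 1) * ((ω : ZMod p) ^ ((p-1)/2) + 1) = 0 := by
      have hr : ((ω : ZMod p) ^ ((p-1)/2) - 1) * ((ω : ZMod p) ^ ((p-1)/2) + 1)
          = ((ω : ZMod p) ^ ((p-1)/2)) ^ 2 - 1 := by ring
      rw [hr, hy2, sub_self]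
    rcases mul_eq_zero.mp hfac with h | h
    · exact absurd (sub_eq_zero.mp h) hy1
    · exact eq_neg_of_add_eq_zero_left h
  -- condition equivalence
  have hkey : ∀ w < f, ((1 : ZMod p) + (ω : ZMod p) ^ (d*w+k) = 0 ↔ d*w + k = (p-1)/2) := by
    intro w hw
    constructor
    · intro h
      have he : (ω : ZMod p) ^ (d*w+k) = (ω : ZMod p) ^ ((p-1)/2) := by
        rw [hneg]
        exact eq_neg_of_add_eq_zero_right h
      have hu : ω ^ (d*w+k) = ω ^ ((p-1)/2) :=
        Units.ext (by simpa [Units.val_pow_eq_pow_val] using he)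
      have hlt1 : d*w + k < p - 1 := by
        have h1 : d * (w+1) ≤ d * f := Nat.mul_le_mul_left d hw
        have h2 : d * (w+1) = d*w + d := Nat.mul_succ d w
        omega
      exact hinj _ hlt1 _ (by omega) hu
    · intro h
      rw [h, hneg]; ring
  -- counting
  have hcount : ∑ w ∈ Finset.range f, (if d*w + k = (p-1)/2 then (p:ℂ) else 0)
      = (p : ℂ) * (if theta d f = k then 1 else 0) := by
    rcases Nat.even_or_odd f with hfe | hfo
    · obtain ⟨g, hg⟩ := hfe
      have hg' : f = 2*g := by omega
      have hM : (p-1)/2 = d*g := by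
        have h1 : p - 1 = 2*(d*g) := by rw [hP, hg']; ring
        omega
      have hθ : theta d f = 0 := by rw [theta, if_pos ⟨g, hg⟩]
      rw [hM, hθ]
      by_cases hk0 : k = 0
      · subst hk0
        rw [if_pos rfl, mul_one]
        rw [Finset.sum_eq_single_of_mem g (Finset.mem_range.mpr (by omega))]
        · simp
        · intro w _ hne
          rw [if_neg]
          intro hc
          exact hne (Nat.eq_of_mul_eq_mul_left hd0 (by omega))
      · rw [if_neg (by omega : ¬ (0 = k)), mul_zero]
        apply Finset.sum_eq_zero
        intro w _
        rw [if_neg]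
        intro hc
        have h1 : (d*w + k) % d = (d*g) % d := by rw [hc]
        rw [Nat.mul_add_mod, Nat.mul_mod_right, Nat.mod_eq_of_lt hk] at h1
        exact hk0 h1
    · obtain ⟨h, hh⟩ := hfo
      have hde : Even d := by
        have hev : Even (d * f) := by
          rw [← hP]; obtain ⟨m, hm⟩ := hodd; exact ⟨m, by omega⟩
        rcases Nat.even_mul.mp hev with h1 | h1
        · exact h1
        · exact absurd h1 (by rw [Nat.even_iff]; omega)
      obtain ⟨e, he⟩ := hde
      have hd2e : d = 2*e := by omega
      have hM : (p-1)/2 = d*h + e := by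
        have h1 : p - 1 = 2*(d*h + e) := by rw [hP, hd2e, hh]; ring
        omega
      have hθ : theta d f = e := by
        rw [theta, if_neg (by rw [Nat.even_iff]; omega)]
        omega
      rw [hM, hθ]
      by_cases hke : k = e
      · subst hke
        rw [if_pos rfl, mul_one]
        rw [Finset.sum_eq_single_of_mem h (Finset.mem_range.mpr (by omega))]
        · rw [if_pos rfl]
        · intro w _ hne
          rw [if_neg]
          intro hc
          exact hne (Nat.eq_of_mul_eq_mul_left hd0 (by omega))
      · rw [if_neg (fun hek => hke hek.symm), mul_zero]
        apply Finset.sum_eq_zero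
        intro w _
        rw [if_neg]
        intro hc
        have h1 : (d*w + k) % d = (d*h + e) % d := by rw [hc]
        rw [Nat.mul_add_mod, Nat.mul_add_mod, Nat.mod_eq_of_lt hk,
          Nat.mod_eq_of_lt (by omega : e < d)] at h1
        exact hke h1
  -- inner sum over a full set of units
  have hsum_units : ∀ c : ZMod p, ∑ n ∈ Finset.range (p-1), ζ ^ (((ω : ZMod p) ^ n) * c).val
      = (if c = 0 then (p:ℂ) else 0) - 1 := by
    intro c
    rw [← zeta_sum_units_mul hp hζ c]
    refine Finset.sum_bij (fun n _ => ω ^ n) (fun _ _ => Finset.mem_univ _) ?_ ?_ ?_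
    · intro a ha b hb hab
      exact hinj a (Finset.mem_range.mp ha) b (Finset.mem_range.mp hb) hab
    · intro x _
      obtain ⟨n, hn⟩ := hω x
      refine ⟨n % (p-1), Finset.mem_range.mpr (Nat.mod_lt _ hP0), ?_⟩
      have hmm : ω ^ (n % (p-1)) = ω ^ n := by rw [← hord]; exact pow_mod_orderOf ω n
      exact hmm.trans hn
    · intro n _
      rw [Units.val_pow_eq_pow_val]
  -- the big reindexing
  have hbij : ∑ x ∈ Finset.range d ×ˢ (Finset.range f ×ˢ Finset.range f),
      (ζ ^ ((ω : ZMod p) ^ (d * x.2.1 + x.1)).val *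
        ζ ^ ((ω : ZMod p) ^ (d * x.2.2 + (x.1 + k))).val)
      = ∑ y ∈ Finset.range f ×ˢ Finset.range (p-1),
          ζ ^ (((ω : ZMod p) ^ y.2) * (1 + (ω : ZMod p) ^ (d * y.1 + k))).val := by
    refine Finset.sum_nbij' (fun x => ((x.2.2 + f - x.2.1) % f, d * x.2.1 + x.1))
      (fun y => (y.2 % d, (y.2 / d, (y.2 / d + y.1) % f))) ?_ ?_ ?_ ?_ ?_
    · rintro ⟨l, u, v⟩ hx
      simp only [Finset.mem_product, Finset.mem_range] at hx ⊢
      obtain ⟨hl, hu, hv⟩ := hx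
      refine ⟨Nat.mod_lt _ hf0, ?_⟩
      have h1 : d * (u+1) ≤ d * f := Nat.mul_le_mul_left d hu
      have h2 : d * (u+1) = d*u + d := Nat.mul_succ d u
      omega
    · rintro ⟨w, n⟩ hy
      simp only [Finset.mem_product, Finset.mem_range] at hy ⊢
      obtain ⟨hw, hn⟩ := hy
      refine ⟨Nat.mod_lt _ hd0, ?_, Nat.mod_lt _ hf0⟩
      rw [Nat.div_lt_iff_lt_mul hd0]
      have : f * d = d * f := by ring
      omega
    · rintro ⟨l, u, v⟩ hx
      simp only [Finset.mem_product, Finset.mem_range] at hx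
      obtain ⟨hl, hu, hv⟩ := hx
      have h1 : (d * u + l) % d = l := by rw [Nat.mul_add_mod, Nat.mod_eq_of_lt hl]
      have h2 : (d * u + l) / d = u := by
        rw [Nat.mul_add_div hd0, Nat.div_eq_of_lt hl, Nat.add_zero]
      have h3 : (u + (v + f - u) % f) % f = v := by
        rw [Nat.add_mod_mod, (by omega : u + (v + f - u) = v + f), Nat.add_mod_right,
          Nat.mod_eq_of_lt hv]
      simp only [h1, h2, h3]
    · rintro ⟨w, n⟩ hy
      simp only [Finset.mem_product, Finset.mem_range] at hy
      obtain ⟨hw, hn⟩ := hy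
      have hu : n / d < f := by
        rw [Nat.div_lt_iff_lt_mul hd0]
        have : f * d = d * f := by ring
        omega
      have h1 : ((n / d + w) % f + f - n / d) % f = w := by
        rw [(by omega : (n / d + w) % f + f - n / d = (n / d + w) % f + (f - n / d)),
          Nat.mod_add_mod, (by omega : n / d + w + (f - n / d) = w + f),
          Nat.add_mod_right, Nat.mod_eq_of_lt hw]
      have h2 : d * (n / d) + n % d = n := Nat.div_add_mod n d
      simp only [h1, h2]
    · rintro ⟨l, u, v⟩ hx
      simp only [Finset.mem_product, Finset.mem_range] at hx
      obtain ⟨hl, hu, hv⟩ := hx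
      have hcong : (ω : ZMod p) ^ (d * u + l + (d * ((v + f - u) % f) + k))
          = (ω : ZMod p) ^ (d * v + (l + k)) := by
        apply hpow
        rw [hP]
        have c2 : d * ((v + f - u) % f) ≡ d * (v + f - u) [MOD d * f] :=
          (Nat.mod_modEq _ f).mul_left' d
        have c3 : d * u + l + (d * ((v + f - u) % f) + k)
            ≡ d * u + l + (d * (v + f - u) + k) [MOD d * f] :=
          Nat.ModEq.add_left _ (c2.add_right k)
        have h5 : d * u + d * (v + f - u) = d * v + d * f := by
          rw [← Nat.mul_add, (by omega : u + (v + f - u) = v + f), Nat.mul_add]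
        have e1 : d * u + l + (d * (v + f - u) + k) = d * v + (l + k) + d * f := by omega
        calc d * u + l + (d * ((v + f - u) % f) + k)
            ≡ d * u + l + (d * (v + f - u) + k) [MOD d * f] := c3
          _ = d * v + (l + k) + d * f := e1
          _ ≡ d * v + (l + k) [MOD d * f] := Nat.add_mod_right _ _
      have hsplit : ((ω : ZMod p) ^ (d * u + l)) * (1 + (ω : ZMod p) ^ (d * ((v + f - u) % f) + k))
          = (ω : ZMod p) ^ (d * u + l) + (ω : ZMod p) ^ (d * v + (l + k)) := by
        rw [mul_add, mul_one, ← pow_add, hcong]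
      show ζ ^ ((ω : ZMod p) ^ (d * u + l)).val * ζ ^ ((ω : ZMod p) ^ (d * v + (l + k))).val
          = ζ ^ (((ω : ZMod p) ^ (d * u + l)) * (1 + (ω : ZMod p) ^ (d * ((v + f - u) % f) + k))).val
      rw [hsplit, zeta_val_add hζ]
  calc ∑ l ∈ Finset.range d, gaussPeriod p d f ω ζ l * gaussPeriod p d f ω ζ (l + k)
      = ∑ x ∈ Finset.range d ×ˢ (Finset.range f ×ˢ Finset.range f),
          (ζ ^ ((ω : ZMod p) ^ (d * x.2.1 + x.1)).val *
            ζ ^ ((ω : ZMod p) ^ (d * x.2.2 + (x.1 + k))).val) := by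
        rw [Finset.sum_product]
        refine Finset.sum_congr rfl fun l _ => ?_
        rw [Finset.sum_product, gaussPeriod, gaussPeriod, Finset.sum_mul_sum]
    _ = ∑ y ∈ Finset.range f ×ˢ Finset.range (p-1),
          ζ ^ (((ω : ZMod p) ^ y.2) * (1 + (ω : ZMod p) ^ (d * y.1 + k))).val := hbij
    _ = ∑ w ∈ Finset.range f, ∑ n ∈ Finset.range (p-1),
          ζ ^ (((ω : ZMod p) ^ n) * (1 + (ω : ZMod p) ^ (d * w + k))).val :=
        Finset.sum_product _ _ _
    _ = ∑ w ∈ Finset.range f,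
          ((if (1 : ZMod p) + (ω : ZMod p) ^ (d*w+k) = 0 then (p:ℂ) else 0) - 1) :=
        Finset.sum_congr rfl fun w _ => hsum_units _
    _ = ∑ w ∈ Finset.range f, ((if d*w + k = (p-1)/2 then (p:ℂ) else 0) - 1) := by
        refine Finset.sum_congr rfl fun w hw => ?_
        rw [if_congr (hkey w (Finset.mem_range.mp hw)) rfl rfl]
    _ = (p : ℂ) * (if theta d f = k then 1 else 0) - f := by
        rw [Finset.sum_sub_distrib, hcount, Finset.sum_const, Finset.card_range,
          nsmul_eq_mul, mul_one]
end

section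
/- (Lemma 2, case k = 2) Let p be an odd prime, d ≥ 2 with d ∣ p−1, f = (p−1)/d. For every 0 ≤ ν ≤ d−1: n(2,ν) + f² = p·(ν,θ). -/
open Finset

section Helpers

private lemma sum_rot {M : Type*} [AddCommMonoid M] (n : ℕ) (g : ℕ → M) :
    ∑ v ∈ range (n + 1), g ((1 + v) % (n + 1)) = ∑ v ∈ range (n + 1), g v := by
  rw [Finset.sum_range_succ, Finset.sum_range_succ' g n]
  congr 1
  · refine Finset.sum_congr rfl fun v hv => ?_
    have hv' := mem_range.mp hv
    rw [Nat.mod_eq_of_lt (by omega), add_comm]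
  · rw [add_comm 1 n, Nat.mod_self]

private lemma sum_shift {M : Type*} [AddCommMonoid M] (f : ℕ) (u : ℕ) (g : ℕ → M) :
    ∑ v ∈ range f, g ((u + v) % f) = ∑ v ∈ range f, g v := by
  induction u generalizing g with
  | zero =>
    refine Finset.sum_congr rfl fun v hv => ?_
    rw [zero_add, Nat.mod_eq_of_lt (mem_range.mp hv)]
  | succ u ih =>
    rcases Nat.eq_zero_or_pos f with rfl | hf
    · simp
    obtain ⟨n, rfl⟩ : ∃ n, f = n + 1 := ⟨f - 1, by omega⟩
    have h1 : ∀ v, (u + 1 + v) % (n + 1) = (u + (1 + v) % (n + 1)) % (n + 1) := by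
      intro v
      rw [Nat.add_mod_mod, ← add_assoc]
    simp_rw [h1]
    rw [sum_rot n (fun x => g ((u + x) % (n + 1)))]
    exact ih g

private lemma pow_mul_mod {K : Type*} [Monoid K] (W : K) (d f : ℕ) (h1 : W ^ (d * f) = 1)
    (x : ℕ) : W ^ (d * (x % f)) = W ^ (d * x) := by
  rcases Nat.eq_zero_or_pos f with rfl | hf
  · rw [Nat.mod_zero]
  have hx : d * x = d * (x % f) + d * f * (x / f) := by
    have h := Nat.mod_add_div x f
    calc d * x = d * (x % f + f * (x / f)) := by rw [h]
    _ = d * (x % f) + d * f * (x / f) := by ring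
  rw [hx, pow_add, pow_mul W (d * f) (x / f), h1, one_pow, mul_one]

private lemma sum_units {p d f : ℕ} [NeZero p] (hp1 : 1 < p) (hd : 0 < d)
    (hdf : d * f = p - 1) (ω : (ZMod p)ˣ) (horder : orderOf ω = p - 1)
    (hsurj : ∀ x : (ZMod p)ˣ, ∃ n : ℕ, ω ^ n = x) (g : ZMod p → ℂ) :
    ∑ i ∈ range d, ∑ u ∈ range f, g ((ω : ZMod p) ^ (d * u + i)) =
      ∑ x : (ZMod p)ˣ, g (x : ZMod p) := by
  have h1 : ∑ i ∈ range d, ∑ u ∈ range f, g ((ω : ZMod p) ^ (d * u + i)) =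
      ∑ q ∈ range d ×ˢ range f, g ((ω : ZMod p) ^ (d * q.2 + q.1)) := by
    rw [Finset.sum_product]
  rw [h1]
  have h2 : ∑ q ∈ range d ×ˢ range f, g ((ω : ZMod p) ^ (d * q.2 + q.1)) =
      ∑ n ∈ range (d * f), g ((ω : ZMod p) ^ n) := by
    refine Finset.sum_nbij' (i := fun q => d * q.2 + q.1) (j := fun n => (n % d, n / d))
      ?_ ?_ ?_ ?_ ?_
    · intro q hq
      rw [Finset.mem_product] at hq
      obtain ⟨hq1, hq2⟩ := hq
      rw [mem_range] at *
      calc d * q.2 + q.1 < d * q.2 + d := by omega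
      _ = d * (q.2 + 1) := by ring
      _ ≤ d * f := Nat.mul_le_mul_left d (by omega)
    · intro n hn
      rw [mem_range] at hn
      rw [Finset.mem_product, mem_range, mem_range]
      exact ⟨Nat.mod_lt _ hd, Nat.div_lt_of_lt_mul hn⟩
    · intro q hq
      rw [Finset.mem_product, mem_range, mem_range] at hq
      obtain ⟨hq1, hq2⟩ := hq
      have e1 : (d * q.2 + q.1) % d = q.1 := by
        rw [Nat.mul_add_mod, Nat.mod_eq_of_lt hq1]
      have e2 : (d * q.2 + q.1) / d = q.2 := by
        rw [Nat.mul_add_div hd, Nat.div_eq_of_lt hq1, add_zero]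
      rw [e1, e2]
    · intro n _
      exact Nat.div_add_mod n d
    · intro q _
      rfl
  rw [h2, hdf]
  refine Finset.sum_bij (i := fun n _ => ω ^ n) ?_ ?_ ?_ ?_
  · intro n _; exact mem_univ _
  · intro n₁ hn₁ n₂ hn₂ h
    rw [mem_range] at hn₁ hn₂
    exact pow_injOn_Iio_orderOf (by rwa [Set.mem_Iio, horder]) (by rwa [Set.mem_Iio, horder]) h
  · intro x _
    obtain ⟨n, hn⟩ := hsurj x
    refine ⟨n % (p - 1), mem_range.mpr (Nat.mod_lt _ (by omega)), ?_⟩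
    have e : ω ^ (n % (p - 1)) = ω ^ n := by rw [← horder]; exact pow_mod_orderOf ω n
    rw [e, hn]
  · intro n _
    rw [Units.val_pow_eq_pow_val]

private lemma sum_unit_mul {p : ℕ} [Fact p.Prime] (ψ : AddChar (ZMod p) ℂ) (hψ : ψ ≠ 0)
    (c : ZMod p) :
    ∑ x : (ZMod p)ˣ, ψ ((x : ZMod p) * c) = if c = 0 then ((p : ℂ) - 1) else -1 := by
  have hp : p.Prime := Fact.out
  have hp1 : 1 < p := hp.one_lt
  split_ifs with hc
  · subst hc
    simp only [mul_zero, AddChar.map_zero_eq_one]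
    rw [Finset.sum_const, Finset.card_univ, ZMod.card_units_eq_totient,
      Nat.totient_prime hp, nsmul_eq_mul, mul_one]
    push_cast [Nat.cast_sub (by omega : 1 ≤ p)]
    ring
  · have hcu : IsUnit c := Ne.isUnit hc
    have hval : (hcu.unit : ZMod p) = c := hcu.unit_spec
    have step1 : ∑ x : (ZMod p)ˣ, ψ ((x : ZMod p) * c) =
        ∑ x : (ZMod p)ˣ, ψ ((x : ZMod p)) := by
      refine Fintype.sum_equiv (Equiv.mulRight hcu.unit) _ _ fun x => ?_
      simp [hval]
    rw [step1]
    have step2 : ∑ x : (ZMod p)ˣ, ψ ((x : ZMod p)) =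
        ∑ a ∈ (univ : Finset (ZMod p)).erase 0, ψ a := by
      refine Finset.sum_bij (i := fun x _ => (x : ZMod p)) ?_ ?_ ?_ ?_
      · intro x _
        exact Finset.mem_erase.mpr ⟨x.ne_zero, mem_univ _⟩
      · intro x₁ _ x₂ _ h
        exact Units.ext h
      · intro a ha
        have ha' : a ≠ 0 := (Finset.mem_erase.mp ha).1
        exact ⟨ha'.isUnit.unit, mem_univ _, ha'.isUnit.unit_spec⟩
      · intro x _; rfl
    rw [step2]
    have h0 : ∑ a : ZMod p, ψ a = 0 := AddChar.sum_eq_zero_iff_ne_zero.mpr hψ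
    have h1 : ψ 0 + ∑ a ∈ (univ : Finset (ZMod p)).erase 0, ψ a = ∑ a : ZMod p, ψ a :=
      Finset.add_sum_erase _ _ (mem_univ 0)
    rw [h0, AddChar.map_zero_eq_one] at h1
    linear_combination h1

private lemma theta_facts (p d f : ℕ) (hp2 : p % 2 = 1) (hdf : d * f = p - 1) :
    ∃ m M : ℕ, m + M = f ∧ d * m + theta d f = (p - 1) / 2 ∧
      d * M = theta d f + (p - 1) / 2 := by
  by_cases hfe : Even f
  · have hf2 : f % 2 = 0 := Nat.even_iff.mp hfe
    have e1 : d * f = 2 * (d * (f / 2)) := by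
      have h : f = 2 * (f / 2) := by omega
      calc d * f = d * (2 * (f / 2)) := by rw [← h]
      _ = 2 * (d * (f / 2)) := by ring
    have e2 : 2 * (d * (f / 2)) = p - 1 := by rw [← e1, hdf]
    have key : d * (f / 2) = (p - 1) / 2 := by
      generalize d * (f / 2) = X at e2 ⊢
      omega
    refine ⟨f / 2, f / 2, by omega, ?_, ?_⟩
    · simp only [theta, if_pos hfe, add_zero, key]
    · simp only [theta, if_pos hfe, zero_add, key]
  · have hf2 : f % 2 = 1 := Nat.odd_iff.mp (Nat.not_even_iff_odd.mp hfe)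
    have hev : Even (d * f) := by
      rw [hdf]; exact Nat.even_iff.mpr (by omega)
    have hde : d % 2 = 0 := by
      rcases Nat.even_mul.mp hev with h | h
      · exact Nat.even_iff.mp h
      · exact absurd h hfe
    refine ⟨(f - 1) / 2, (f + 1) / 2, by omega, ?_, ?_⟩
    · have k1 : f - 1 = 2 * ((f - 1) / 2) := by omega
      have k2 : d * (f - 1) = 2 * (d * ((f - 1) / 2)) := by
        conv_lhs => rw [k1]
        ring
      have k3 : d * (f - 1) + d = d * f := by
        have hh : f - 1 + 1 = f := by omega
        calc d * (f - 1) + d = d * ((f - 1) + 1) := by ring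
        _ = d * f := by rw [hh]
      have e2 : 2 * (d * ((f - 1) / 2)) + d = p - 1 := by rw [← k2, k3, hdf]
      simp only [theta, if_neg hfe]
      generalize d * ((f - 1) / 2) = X at e2 ⊢
      omega
    · have k1 : f + 1 = 2 * ((f + 1) / 2) := by omega
      have k2 : d * (f + 1) = 2 * (d * ((f + 1) / 2)) := by
        conv_lhs => rw [k1]
        ring
      have k3 : d * (f + 1) = d * f + d := by ring
      have e2 : 2 * (d * ((f + 1) / 2)) = p - 1 + d := by rw [← k2, k3, hdf]
      simp only [theta, if_neg hfe]
      generalize d * ((f + 1) / 2) = X at e2 ⊢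
      omega

end Helpers

/-- Lemma 2, case k = 2: `n(2,ν) + f² = p·(ν,θ)`. -/
theorem nInt_two (p d f : ℕ) (hp : p.Prime) (hodd : Odd p)
    (hd : 2 ≤ d) (hdvd : d ∣ p - 1) (hf : f = (p - 1) / d)
    (ω : (ZMod p)ˣ) (hω : ∀ x : (ZMod p)ˣ, ∃ n : ℕ, ω ^ n = x)
    (ζ : ℂ) (hζ : IsPrimitiveRoot ζ p)
    (ν : ℕ) (hν : ν < d) :
    nInt p d f ω ζ 2 ν + (f : ℂ) ^ 2 = (p : ℂ) * (cycNum p d f ω ν (theta d f) : ℂ) := by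
  haveI : Fact p.Prime := ⟨hp⟩
  haveI : NeZero p := ⟨hp.ne_zero⟩
  have hp2 : p % 2 = 1 := Nat.odd_iff.mp hodd
  have hp3 : 2 < p := by
    have := hp.two_le
    omega
  have hdf : d * f = p - 1 := by rw [hf]; exact Nat.mul_div_cancel' hdvd
  have hdpos : 0 < d := by omega
  have hfpos : 0 < f := by
    rcases Nat.eq_zero_or_pos f with h | h
    · rw [h, mul_zero] at hdf; omega
    · exact h
  have hcard : Nat.card (ZMod p)ˣ = p - 1 := by
    rw [Nat.card_eq_fintype_card, ZMod.card_units_eq_totient, Nat.totient_prime hp]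
  have horder : orderOf ω = p - 1 := by
    rw [← hcard]
    apply orderOf_eq_card_of_forall_mem_zpowers
    intro x
    obtain ⟨n, hn⟩ := hω x
    exact Subgroup.mem_zpowers_iff.mpr ⟨n, by rw [zpow_natCast]; exact hn⟩
  have hW1 : (ω : ZMod p) ^ (p - 1) = 1 := by
    have h := pow_orderOf_eq_one ω
    rw [horder] at h
    calc (ω : ZMod p) ^ (p - 1) = ((ω ^ (p - 1) : (ZMod p)ˣ) : ZMod p) := by
          rw [Units.val_pow_eq_pow_val]
    _ = 1 := by rw [h, Units.val_one]
  have hWdf : (ω : ZMod p) ^ (d * f) = 1 := by rw [hdf]; exact hW1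
  have hζp : ζ ^ p = 1 := hζ.pow_eq_one
  obtain ⟨ψ, hψapp⟩ : ∃ ψ : AddChar (ZMod p) ℂ, ∀ a : ZMod p, ψ a = ζ ^ a.val :=
    ⟨AddChar.zmodChar p hζp, fun a => rfl⟩
  have hψ0 : ψ ≠ 0 := by
    intro h
    haveI : Fact (1 < p) := ⟨hp.one_lt⟩
    have h1 : ψ 1 = 1 := by rw [h, AddChar.zero_apply]
    rw [hψapp, ZMod.val_one, pow_one] at h1
    exact hζ.ne_one hp.one_lt h1
  have hgp : ∀ j, gaussPeriod p d f ω ζ j =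
      ∑ u ∈ range f, ψ ((ω : ZMod p) ^ (d * u + j)) := by
    intro j
    unfold gaussPeriod
    exact Finset.sum_congr rfl fun u _ => (hψapp _).symm
  have hneg : (ω : ZMod p) ^ ((p - 1) / 2) = -1 := by
    have hsq : (ω : ZMod p) ^ ((p - 1) / 2) * (ω : ZMod p) ^ ((p - 1) / 2) = 1 := by
      rw [← pow_add, show (p - 1) / 2 + (p - 1) / 2 = p - 1 from by omega]
      exact hW1
    rcases mul_self_eq_one_iff.mp hsq with h | h
    · exfalso
      have hu : ω ^ ((p - 1) / 2) = 1 :=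
        Units.ext (by rw [Units.val_pow_eq_pow_val, h, Units.val_one])
      have hdvd2 : orderOf ω ∣ (p - 1) / 2 := orderOf_dvd_of_pow_eq_one hu
      rw [horder] at hdvd2
      have := Nat.le_of_dvd (by omega) hdvd2
      omega
    · exact h
  obtain ⟨m, M, hmM, hdm, hdM⟩ := theta_facts p d f hp2 hdf
  have key1 : ∀ b : ℕ, (ω : ZMod p) ^ (d * ((b + M) % f)) =
      -(ω : ZMod p) ^ (d * b + theta d f) := by
    intro b
    rw [pow_mul_mod _ d f hWdf]
    have e : d * (b + M) = (d * b + theta d f) + (p - 1) / 2 := by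
      have h : d * (b + M) = d * b + d * M := by ring
      rw [h, hdM, ← add_assoc]
    rw [e, pow_add, hneg, mul_neg_one]
  have key2 : ∀ v : ℕ, (ω : ZMod p) ^ (d * ((v + m) % f) + theta d f) =
      -(ω : ZMod p) ^ (d * v) := by
    intro v
    rw [pow_add, pow_mul_mod _ d f hWdf]
    have e : d * (v + m) = d * v + d * m := by ring
    rw [e, pow_add, mul_assoc, ← pow_add, hdm, hneg, mul_neg_one]
  have hterm : ∀ i u v w : ℕ,
      ψ ((ω : ZMod p) ^ (d * u + i)) *
        (ψ ((ω : ZMod p) ^ (d * ((u + v) % f) + i)) *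
          ψ ((ω : ZMod p) ^ (d * ((u + w) % f) + (i + ν)))) =
      ψ ((ω : ZMod p) ^ (d * u + i) *
        (1 + (ω : ZMod p) ^ (d * v) + (ω : ZMod p) ^ (d * w + ν))) := by
    intro i u v w
    have e1 : (ω : ZMod p) ^ (d * ((u + v) % f) + i) =
        (ω : ZMod p) ^ (d * u + i) * (ω : ZMod p) ^ (d * v) := by
      rw [pow_add, pow_mul_mod _ d f hWdf, ← pow_add, ← pow_add]
      congr 1
      ring
    have e2 : (ω : ZMod p) ^ (d * ((u + w) % f) + (i + ν)) =
        (ω : ZMod p) ^ (d * u + i) * (ω : ZMod p) ^ (d * w + ν) := by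
      rw [pow_add, pow_mul_mod _ d f hWdf, ← pow_add, ← pow_add]
      congr 1
      ring
    have harg : (ω : ZMod p) ^ (d * u + i) +
        ((ω : ZMod p) ^ (d * ((u + v) % f) + i) +
          (ω : ZMod p) ^ (d * ((u + w) % f) + (i + ν))) =
        (ω : ZMod p) ^ (d * u + i) *
          (1 + (ω : ZMod p) ^ (d * v) + (ω : ZMod p) ^ (d * w + ν)) := by
      rw [e1, e2]
      ring
    rw [← harg, AddChar.map_add_eq_mul, AddChar.map_add_eq_mul]
  have hexp : ∀ i ∈ range d,
      gaussPeriod p d f ω ζ i ^ 2 * gaussPeriod p d f ω ζ (i + ν) =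
      ∑ u ∈ range f, ∑ v ∈ range f, ∑ w ∈ range f,
        ψ ((ω : ZMod p) ^ (d * u + i) *
          (1 + (ω : ZMod p) ^ (d * v) + (ω : ZMod p) ^ (d * w + ν))) := by
    intro i _
    rw [hgp i, hgp (i + ν), sq, mul_assoc, Finset.sum_mul]
    refine Finset.sum_congr rfl fun u _ => ?_
    rw [← sum_shift f u (fun x => ψ ((ω : ZMod p) ^ (d * x + i))),
      ← sum_shift f u (fun x => ψ ((ω : ZMod p) ^ (d * x + (i + ν))))]
    rw [Finset.sum_mul, Finset.mul_sum]
    refine Finset.sum_congr rfl fun v _ => ?_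
    rw [Finset.mul_sum, Finset.mul_sum]
    refine Finset.sum_congr rfl fun w _ => ?_
    exact hterm i u v w
  set T := (range f ×ˢ range f).filter
      (fun vw : ℕ × ℕ => (1 : ZMod p) + (ω : ZMod p) ^ (d * vw.1)
        + (ω : ZMod p) ^ (d * vw.2 + ν) = 0) with hT
  have main1 : nInt p d f ω ζ 2 ν =
      ∑ v ∈ range f, ∑ w ∈ range f, ∑ i ∈ range d, ∑ u ∈ range f,
        ψ ((ω : ZMod p) ^ (d * u + i) *
          (1 + (ω : ZMod p) ^ (d * v) + (ω : ZMod p) ^ (d * w + ν))) := by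
    unfold nInt
    rw [Finset.sum_congr rfl hexp]
    calc ∑ i ∈ range d, ∑ u ∈ range f, ∑ v ∈ range f, ∑ w ∈ range f,
        ψ ((ω : ZMod p) ^ (d * u + i) *
          (1 + (ω : ZMod p) ^ (d * v) + (ω : ZMod p) ^ (d * w + ν)))
        = ∑ i ∈ range d, ∑ v ∈ range f, ∑ u ∈ range f, ∑ w ∈ range f,
          ψ ((ω : ZMod p) ^ (d * u + i) *
            (1 + (ω : ZMod p) ^ (d * v) + (ω : ZMod p) ^ (d * w + ν))) :=
          Finset.sum_congr rfl fun i _ => Finset.sum_comm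
    _ = ∑ v ∈ range f, ∑ i ∈ range d, ∑ u ∈ range f, ∑ w ∈ range f,
          ψ ((ω : ZMod p) ^ (d * u + i) *
            (1 + (ω : ZMod p) ^ (d * v) + (ω : ZMod p) ^ (d * w + ν))) :=
          Finset.sum_comm
    _ = ∑ v ∈ range f, ∑ i ∈ range d, ∑ w ∈ range f, ∑ u ∈ range f,
          ψ ((ω : ZMod p) ^ (d * u + i) *
            (1 + (ω : ZMod p) ^ (d * v) + (ω : ZMod p) ^ (d * w + ν))) :=
          Finset.sum_congr rfl fun v _ => Finset.sum_congr rfl fun i _ => Finset.sum_comm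
    _ = ∑ v ∈ range f, ∑ w ∈ range f, ∑ i ∈ range d, ∑ u ∈ range f,
          ψ ((ω : ZMod p) ^ (d * u + i) *
            (1 + (ω : ZMod p) ^ (d * v) + (ω : ZMod p) ^ (d * w + ν))) :=
          Finset.sum_congr rfl fun v _ => Finset.sum_comm
  have main2 : ∀ v w : ℕ,
      ∑ i ∈ range d, ∑ u ∈ range f,
        ψ ((ω : ZMod p) ^ (d * u + i) *
          (1 + (ω : ZMod p) ^ (d * v) + (ω : ZMod p) ^ (d * w + ν))) =
      if (1 : ZMod p) + (ω : ZMod p) ^ (d * v) + (ω : ZMod p) ^ (d * w + ν) = 0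
        then ((p : ℂ) - 1) else -1 := by
    intro v w
    rw [sum_units hp.one_lt hdpos hdf ω horder hω
      (fun y => ψ (y * (1 + (ω : ZMod p) ^ (d * v) + (ω : ZMod p) ^ (d * w + ν))))]
    exact sum_unit_mul ψ hψ0 _
  have main3 : nInt p d f ω ζ 2 ν = (p : ℂ) * (T.card : ℂ) - (f : ℂ) ^ 2 := by
    rw [main1]
    have step : ∑ v ∈ range f, ∑ w ∈ range f, ∑ i ∈ range d, ∑ u ∈ range f,
        ψ ((ω : ZMod p) ^ (d * u + i) *
          (1 + (ω : ZMod p) ^ (d * v) + (ω : ZMod p) ^ (d * w + ν))) =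
        ∑ q ∈ range f ×ˢ range f,
          ((p : ℂ) * (if (1 : ZMod p) + (ω : ZMod p) ^ (d * q.1)
            + (ω : ZMod p) ^ (d * q.2 + ν) = 0 then (1 : ℂ) else 0) - 1) := by
      rw [Finset.sum_product]
      refine Finset.sum_congr rfl fun v _ => Finset.sum_congr rfl fun w _ => ?_
      rw [main2 v w]
      split_ifs <;> ring
    rw [step, Finset.sum_sub_distrib, ← Finset.mul_sum, Finset.sum_boole, Finset.sum_const,
      Finset.card_product, Finset.card_range, nsmul_eq_mul, mul_one]
    rw [hT]
    push_cast
    ring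
  have hcyc : (cycNum p d f ω ν (theta d f) : ℕ) = T.card := by
    have hS : cycNum p d f ω ν (theta d f) =
        ((range f ×ˢ range f).filter (fun ab : ℕ × ℕ =>
          (1 : ZMod p) + (ω : ZMod p) ^ (d * ab.1 + ν)
            = (ω : ZMod p) ^ (d * ab.2 + theta d f))).card := by
      unfold cycNum
      rw [← Nat.card_eq_finsetCard]
      refine Nat.card_congr (Equiv.subtypeEquivRight fun uv => ?_)
      simp only [Finset.mem_filter, Finset.mem_product, Finset.mem_range]
      tauto
    rw [hS, hT]
    refine Finset.card_nbij' (i := fun ab : ℕ × ℕ => ((ab.2 + M) % f, ab.1))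
      (j := fun vw : ℕ × ℕ => (vw.2, (vw.1 + m) % f)) ?_ ?_ ?_ ?_
    · intro ab hab
      rw [Finset.mem_coe, Finset.mem_filter, Finset.mem_product, mem_range, mem_range] at hab
      obtain ⟨⟨h1, h2⟩, h3⟩ := hab
      rw [Finset.mem_coe, Finset.mem_filter, Finset.mem_product, mem_range, mem_range]
      refine ⟨⟨Nat.mod_lt _ hfpos, h1⟩, ?_⟩
      dsimp only
      rw [key1 ab.2]
      linear_combination h3
    · intro vw hvw
      rw [Finset.mem_coe, Finset.mem_filter, Finset.mem_product, mem_range, mem_range] at hvw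
      obtain ⟨⟨h1, h2⟩, h3⟩ := hvw
      rw [Finset.mem_coe, Finset.mem_filter, Finset.mem_product, mem_range, mem_range]
      refine ⟨⟨h2, Nat.mod_lt _ hfpos⟩, ?_⟩
      dsimp only
      rw [key2 vw.1]
      linear_combination h3
    · intro ab hab
      rw [Finset.mem_coe, Finset.mem_filter, Finset.mem_product, mem_range, mem_range] at hab
      obtain ⟨⟨h1, h2⟩, _⟩ := hab
      have e : ((ab.2 + M) % f + m) % f = ab.2 := by
        rw [Nat.mod_add_mod, show ab.2 + M + m = ab.2 + f from by omega,
          Nat.add_mod_right, Nat.mod_eq_of_lt h2]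
      dsimp only
      rw [e]
    · intro vw hvw
      rw [Finset.mem_coe, Finset.mem_filter, Finset.mem_product, mem_range, mem_range] at hvw
      obtain ⟨⟨h1, h2⟩, _⟩ := hvw
      have e : ((vw.1 + m) % f + M) % f = vw.1 := by
        rw [Nat.mod_add_mod, show vw.1 + m + M = vw.1 + f from by omega,
          Nat.add_mod_right, Nat.mod_eq_of_lt h1]
      dsimp only
      rw [e]
  rw [main3, hcyc]
  ring
end
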